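/- Let f : ℝ^{n+1} → ℝ satisfy the heat equation (or adjoint heat equation) in an open set 𝒪 ⊂ ℝ^n × ℝ and be identically zero outside 𝒪, with ∇f bounded on 𝒪. Then f is Hölder continuous of exponent 1/2 in the time variable: there is a dimensional constant c such that for all X ∈ ℝ^n and s, t ∈ ℝ, |f(X,t) − f(X,s)| ≤ c ‖∇f‖_{L^∞(𝒪)} |t − s|^{1/2}. -/

import Mathlib

open MeasureTheory Real Set Filter Topology
open scoped ENNReal NNReal RealInnerProductSpace BigOperators

noncomputable section

abbrev Pt (n : ℕ) := EuclideanSpace ℝ (Fin n) × ℝ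

/-- Parabolic distance between points of `ℝ^n × ℝ`. -/
def pdist {n : ℕ} (p q : Pt n) : ℝ := dist p.1 q.1 + Real.sqrt |p.2 - q.2|

/-- Second pure spatial derivative in direction `i`. -/
def sdd {n : ℕ} (u : Pt n → ℝ) (i : Fin n) (p : Pt n) : ℝ :=
  fderiv ℝ (fun q => fderiv ℝ u q (EuclideanSpace.single i 1, (0 : ℝ))) p
    (EuclideanSpace.single i 1, (0 : ℝ))

/-- Time derivative. -/
def td {n : ℕ} (u : Pt n → ℝ) (p : Pt n) : ℝ := fderiv ℝ u p (0, (1 : ℝ))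

/-- `u` solves the adjoint heat equation `Δu + ∂ₜ u = 0` on `s`. -/
def IsAdjCaloricOn {n : ℕ} (u : Pt n → ℝ) (s : Set (Pt n)) : Prop :=
  ContDiffOn ℝ 2 u s ∧ ∀ p ∈ s, (∑ i : Fin n, sdd u i p) + td u p = 0

/-- `u` solves the heat equation `Δu - ∂ₜ u = 0` on `s`. -/
def IsCaloricOn {n : ℕ} (u : Pt n → ℝ) (s : Set (Pt n)) : Prop :=
  ContDiffOn ℝ 2 u s ∧ ∀ p ∈ s, (∑ i : Fin n, sdd u i p) - td u p = 0

/-! ### Auxiliary lemmas -/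

section Aux

lemma lip_of_subset {h : ℝ → ℝ} {V : Set ℝ} {M : ℝ}
    (hd : ∀ x ∈ V, ∃ d, HasDerivAt h d x ∧ |d| ≤ M)
    {x y : ℝ} (hxy : x ≤ y) (hsub : Icc x y ⊆ V) :
    |h y - h x| ≤ M * (y - x) := by
  classical
  set d' : ℝ → ℝ := fun z => if hz : z ∈ V then (hd z hz).choose else 0 with hd'
  have hder : ∀ z ∈ Icc x y, HasDerivWithinAt h (d' z) (Icc x y) z := by
    intro z hz
    have hzV := hsub hz
    simp only [hd', dif_pos hzV]
    exact ((hd z hzV).choose_spec).1.hasDerivWithinAt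
  have hb : ∀ z ∈ Icc x y, ‖d' z‖ ≤ M := by
    intro z hz
    have hzV := hsub hz
    simp only [hd', dif_pos hzV]
    exact ((hd z hzV).choose_spec).2
  have := (convex_Icc x y).norm_image_sub_le_of_norm_hasDerivWithin_le hder hb
    (left_mem_Icc.2 hxy) (right_mem_Icc.2 hxy)
  calc |h y - h x| ≤ M * ‖y - x‖ := this
  _ = M * (y - x) := by rw [Real.norm_eq_abs, abs_of_nonneg (sub_nonneg.2 hxy)]

lemma lip_left {h : ℝ → ℝ} {V : Set ℝ} {M : ℝ}
    (hc : Continuous h)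
    (hd : ∀ x ∈ V, ∃ d, HasDerivAt h d x ∧ |d| ≤ M)
    {x a : ℝ} (hxa : x ≤ a) (hsub : Ico x a ⊆ V) :
    |h a - h x| ≤ M * (a - x) := by
  rcases eq_or_lt_of_le hxa with rfl | hlt
  · simp
  have hcl : IsClosed {w : ℝ | |h w - h x| ≤ M * (w - x)} := by
    apply isClosed_le
    · exact (continuous_abs.comp ((hc.sub continuous_const)))
    · exact continuous_const.mul (continuous_id.sub continuous_const)
  have hIco : Ico x a ⊆ {w : ℝ | |h w - h x| ≤ M * (w - x)} := by
    intro w hw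
    exact lip_of_subset hd hw.1 (fun z hz => hsub ⟨hz.1, lt_of_le_of_lt hz.2 hw.2⟩)
  have : a ∈ closure (Ico x a) := by
    rw [closure_Ico hlt.ne]; exact ⟨hxa, le_rfl⟩
  exact hcl.closure_subset (closure_mono hIco this)

lemma lip_right {h : ℝ → ℝ} {V : Set ℝ} {M : ℝ}
    (hc : Continuous h)
    (hd : ∀ x ∈ V, ∃ d, HasDerivAt h d x ∧ |d| ≤ M)
    {b y : ℝ} (hby : b ≤ y) (hsub : Ioc b y ⊆ V) :
    |h y - h b| ≤ M * (y - b) := by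
  rcases eq_or_lt_of_le hby with rfl | hlt
  · simp
  have hcl : IsClosed {w : ℝ | |h y - h w| ≤ M * (y - w)} := by
    apply isClosed_le
    · exact (continuous_abs.comp ((continuous_const.sub hc)))
    · exact continuous_const.mul (continuous_const.sub continuous_id)
  have hIoc : Ioc b y ⊆ {w : ℝ | |h y - h w| ≤ M * (y - w)} := by
    intro w hw
    exact lip_of_subset hd hw.2 (fun z hz => hsub ⟨lt_of_lt_of_le hw.1 hz.1, hz.2⟩)
  have : b ∈ closure (Ioc b y) := by
    rw [closure_Ioc hlt.ne]; exact ⟨le_rfl, hby⟩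
  exact hcl.closure_subset (closure_mono hIoc this)

lemma lip_of_zero_outside {h : ℝ → ℝ} {V : Set ℝ} {M : ℝ} (hM : 0 ≤ M)
    (hV : IsOpen V) (hc : Continuous h) (h0 : ∀ x ∉ V, h x = 0)
    (hd : ∀ x ∈ V, ∃ d, HasDerivAt h d x ∧ |d| ≤ M) :
    ∀ x y, |h y - h x| ≤ M * |y - x| := by
  have key : ∀ x y, x ≤ y → |h y - h x| ≤ M * (y - x) := by
    intro x y hxy
    by_cases hsub : Icc x y ⊆ V
    · exact lip_of_subset hd hxy hsub
    · set K : Set ℝ := Icc x y \ V with hK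
      have hKne : K.Nonempty := by
        rcases not_subset.1 hsub with ⟨z, hz1, hz2⟩
        exact ⟨z, hz1, hz2⟩
      have hKbdd : BddBelow K := BddBelow.mono diff_subset bddBelow_Icc
      have hKbdd' : BddAbove K := BddAbove.mono diff_subset bddAbove_Icc
      have hKcl : IsClosed K := isClosed_Icc.sdiff hV
      have haK' : sInf K ∈ K := hKcl.closure_subset (csInf_mem_closure hKne hKbdd)
      have hbK' : sSup K ∈ K := hKcl.closure_subset (csSup_mem_closure hKne hKbdd')
      set a := sInf K
      set b := sSup K
      have hxa : x ≤ a := haK'.1.1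
      have hby : b ≤ y := hbK'.1.2
      have hab : a ≤ b := csInf_le_csSup hKne hKbdd hKbdd'
      have hha : h a = 0 := h0 a haK'.2
      have hhb : h b = 0 := h0 b hbK'.2
      have h1 : |h a - h x| ≤ M * (a - x) := by
        apply lip_left hc hd hxa
        intro z hz
        by_contra hzV
        have : z ∈ K := ⟨⟨hz.1, le_trans hz.2.le (le_trans hab hby)⟩, hzV⟩
        exact absurd (csInf_le hKbdd this) (not_le.2 hz.2)
      have h2 : |h y - h b| ≤ M * (y - b) := by
        apply lip_right hc hd hby
        intro z hz
        by_contra hzV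
        have : z ∈ K := ⟨⟨le_trans hxa (le_trans hab hz.1.le), hz.2⟩, hzV⟩
        exact absurd (le_csSup hKbdd' this) (not_le.2 hz.1)
      calc |h y - h x| = |(h y - h b) + (h a - h x)| := by rw [hha, hhb]; ring_nf
      _ ≤ |h y - h b| + |h a - h x| := abs_add_le _ _
      _ ≤ M * (y - b) + M * (a - x) := add_le_add h2 h1
      _ ≤ M * (y - x) := by nlinarith [mul_nonneg hM (sub_nonneg.2 hab)]
  intro x y
  rcases le_total x y with hxy | hxy
  · rw [abs_of_nonneg (sub_nonneg.2 hxy)]; exact key x y hxy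
  · rw [abs_sub_comm, abs_of_nonpos (sub_nonpos.2 hxy)]
    calc |h x - h y| ≤ M * (x - y) := key y x hxy
    _ = M * -(y - x) := by ring

lemma spatial_lipschitz {n : ℕ} {O : Set (Pt n)} {f : Pt n → ℝ} {L : ℝ}
    (hO : IsOpen O) (hc : Continuous f) (hL : 0 ≤ L)
    (hdiff : ∀ p ∈ O, DifferentiableAt ℝ f p)
    (h0 : ∀ p, p ∉ O → f p = 0)
    (hgrad : ∀ p ∈ O, ∀ v : EuclideanSpace ℝ (Fin n), |fderiv ℝ f p (v, (0:ℝ))| ≤ L * ‖v‖) :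
    ∀ (Y Z : EuclideanSpace ℝ (Fin n)) (τ : ℝ), |f (Z, τ) - f (Y, τ)| ≤ L * ‖Z - Y‖ := by
  intro Y Z τ
  set γ : ℝ → Pt n := fun θ => (Y + θ • (Z - Y), τ) with hγdef
  have hγc : Continuous γ := by fun_prop
  have hγd : ∀ θ : ℝ, HasDerivAt γ (Z - Y, (0:ℝ)) θ := by
    intro θ
    have h1 : HasDerivAt (fun θ : ℝ => Y + θ • (Z - Y)) (Z - Y) θ := by
      simpa using ((hasDerivAt_id θ).smul_const (Z - Y)).const_add Y
    exact h1.prodMk (hasDerivAt_const θ τ)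
  set h : ℝ → ℝ := f ∘ γ with hhdef
  have key := lip_of_zero_outside (M := L * ‖Z - Y‖)
    (mul_nonneg hL (norm_nonneg _)) (hO.preimage hγc) (hc.comp hγc)
    (fun θ hθ => h0 (γ θ) hθ)
    (fun θ hθ => ⟨fderiv ℝ f (γ θ) (Z - Y, (0:ℝ)),
      (hdiff (γ θ) hθ).hasFDerivAt.comp_hasDerivAt θ (hγd θ),
      hgrad (γ θ) hθ (Z - Y)⟩) 0 1
  have h0' : γ 0 = (Y, τ) := by simp [hγdef]
  have h1' : γ 1 = (Z, τ) := by simp [hγdef]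
  simpa [hhdef, h0', h1'] using key

lemma euclidean_norm_le {n : ℕ} (x : EuclideanSpace ℝ (Fin n)) (r : ℝ) (hr : 0 ≤ r)
    (h : ∀ i, |x i| ≤ r) : ‖x‖ ≤ Real.sqrt n * r := by
  rw [EuclideanSpace.norm_eq]
  rw [← Real.sqrt_sq hr, ← Real.sqrt_mul (by positivity)]
  apply Real.sqrt_le_sqrt
  calc ∑ i, ‖x i‖ ^ 2 ≤ ∑ _i : Fin n, r ^ 2 := by
        apply Finset.sum_le_sum; intro i _; rw [Real.norm_eq_abs]
        exact pow_le_pow_left₀ (abs_nonneg _) (h i) 2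
  _ = n * r ^ 2 := by simp [mul_comm]

lemma div_bound_succ {m : ℕ} {O : Set (Pt (m+1))} {f : Pt (m+1) → ℝ} {L : ℝ}
    (hO : IsOpen O) (hL : 0 ≤ L)
    (hsm : ContDiffOn ℝ 2 f O)
    (hgrad : ∀ p ∈ O, ∀ v : EuclideanSpace ℝ (Fin (m+1)), |fderiv ℝ f p (v, (0:ℝ))| ≤ L * ‖v‖)
    {a b : Fin (m+1) → ℝ} {r : ℝ} (hr : 0 < r) (hab : ∀ i, b i - a i = 2 * r) {τ : ℝ}
    (hmem : ∀ y ∈ Icc a b, ((EuclideanSpace.equiv (Fin (m+1)) ℝ).symm y, τ) ∈ O) :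
    |∫ y in Icc a b, ∑ i, sdd f i ((EuclideanSpace.equiv (Fin (m+1)) ℝ).symm y, τ)| ≤
      2 * (m+1) * L * (2*r)^m := by
  set ι := (EuclideanSpace.equiv (Fin (m+1)) ℝ).symm with hι
  have hab' : a ≤ b := fun i => by nlinarith [hab i]
  set J : (Fin (m+1) → ℝ) →L[ℝ] Pt (m+1) :=
    ((EuclideanSpace.equiv (Fin (m+1)) ℝ).symm :
      (Fin (m+1) → ℝ) →L[ℝ] EuclideanSpace ℝ (Fin (m+1))).prod 0
    with hJ
  have hcurve : ∀ y : Fin (m+1) → ℝ, HasFDerivAt (fun y => (ι y, τ)) J y := fun y =>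
    ((EuclideanSpace.equiv (Fin (m+1)) ℝ).symm.hasFDerivAt).prodMk (hasFDerivAt_const τ y)
  have hfC1 : ContDiffOn ℝ 1 (fderiv ℝ f) O :=
    hsm.fderiv_of_isOpen hO (by norm_num : (1:WithTop ℕ∞) + 1 ≤ 2)
  set sing : Fin (m+1) → EuclideanSpace ℝ (Fin (m+1)) := fun i => EuclideanSpace.single i 1
    with hsing
  set G : Fin (m+1) → Pt (m+1) → ℝ := fun i q => fderiv ℝ f q (sing i, (0:ℝ)) with hG
  have hGC1 : ∀ i, ContDiffOn ℝ 1 (G i) O := fun i => hfC1.clm_apply contDiffOn_const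
  set F : Fin (m+1) → (Fin (m+1) → ℝ) → ℝ := fun i y => G i (ι y, τ) with hF
  set F' : Fin (m+1) → (Fin (m+1) → ℝ) → ((Fin (m+1) → ℝ) →L[ℝ] ℝ) :=
    fun i y => (fderiv ℝ (G i) (ι y, τ)).comp J with hF'
  have hcO : ∀ y ∈ Icc a b, (ι y, τ) ∈ O := hmem
  have hcurvec : Continuous (fun y : Fin (m+1) → ℝ => (ι y, τ)) := by fun_prop
  have hHc : ∀ i, ContinuousOn (F i) (Icc a b) := by
    intro i
    exact ((hfC1.continuousOn.comp hcurvec.continuousOn hcO).clm_apply continuousOn_const)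
  have hHd : ∀ y ∈ (Set.pi univ fun i => Ioo (a i) (b i)) \ (∅ : Set (Fin (m+1) → ℝ)),
      ∀ i, HasFDerivAt (F i) (F' i y) y := by
    intro y hy i
    have hyI : y ∈ Icc a b := by
      rw [mem_Icc]
      constructor <;> intro j <;>
        [exact (hy.1 j (mem_univ j)).1.le; exact (hy.1 j (mem_univ j)).2.le]
    have hp : (ι y, τ) ∈ O := hcO y hyI
    have hGdiff : DifferentiableAt ℝ (G i) (ι y, τ) :=
      ((hGC1 i).differentiableOn (by norm_num)).differentiableAt (hO.mem_nhds hp)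
    exact hGdiff.hasFDerivAt.comp y (hcurve y)
  have hdivc : ContinuousOn (fun y => ∑ i, sdd f i (ι y, τ)) (Icc a b) := by
    apply continuousOn_finset_sum
    intro i _
    have : ContinuousOn (fderiv ℝ (G i)) O :=
      (hGC1 i).continuousOn_fderiv_of_isOpen hO (by norm_num)
    exact ((this.comp hcurvec.continuousOn hcO).clm_apply continuousOn_const)
  have hHi : IntegrableOn (fun y => ∑ i, F' i y (Pi.single i 1)) (Icc a b) := by
    have : (fun y => ∑ i, F' i y (Pi.single i 1)) = fun y => ∑ i, sdd f i (ι y, τ) := rfl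
    rw [this]
    exact hdivc.integrableOn_compact isCompact_Icc
  have key := MeasureTheory.integral_divergence_of_hasFDerivAt_off_countable'
    a b hab' F F' ∅ countable_empty hHc hHd hHi
  have hkey : (∫ y in Icc a b, ∑ i, sdd f i (ι y, τ)) =
      ∑ i : Fin (m+1), ((∫ x in Icc (a ∘ i.succAbove) (b ∘ i.succAbove), F i (i.insertNth (b i) x)) -
        ∫ x in Icc (a ∘ i.succAbove) (b ∘ i.succAbove), F i (i.insertNth (a i) x)) := key
  rw [hkey]
  have hface : ∀ (i : Fin (m+1)) (z : ℝ), z ∈ Icc (a i) (b i) →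
      |∫ x in Icc (a ∘ i.succAbove) (b ∘ i.succAbove), F i (i.insertNth z x)| ≤ L * (2*r)^m := by
    intro i z hz
    have hb1 : ∀ x ∈ Icc (a ∘ i.succAbove) (b ∘ i.succAbove), ‖F i (i.insertNth z x)‖ ≤ L := by
      intro x hx
      have hmem' : i.insertNth z x ∈ Icc a b := Fin.insertNth_mem_Icc.2 ⟨hz, hx⟩
      have := hgrad _ (hcO _ hmem') (sing i)
      have hnorm : ‖sing i‖ = 1 := by rw [hsing]; simp [EuclideanSpace.norm_single]
      rw [Real.norm_eq_abs]
      calc |F i (i.insertNth z x)| ≤ L * ‖sing i‖ := this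
      _ = L := by rw [hnorm, mul_one]
    have hvol : (volume (Icc (a ∘ i.succAbove) (b ∘ i.succAbove))).toReal = (2*r)^m := by
      simp only [Function.comp_def]
      rw [Real.volume_Icc_pi_toReal (fun j => hab' (i.succAbove j))]
      rw [Finset.prod_congr rfl (fun j _ => hab (i.succAbove j)), Finset.prod_const]
      simp
    calc |∫ x in Icc (a ∘ i.succAbove) (b ∘ i.succAbove), F i (i.insertNth z x)|
        ≤ L * (volume (Icc (a ∘ i.succAbove) (b ∘ i.succAbove))).toReal :=
          norm_setIntegral_le_of_norm_le_const (isCompact_Icc.measure_lt_top) hb1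
      _ = L * (2*r)^m := by rw [hvol]
  calc |∑ i : Fin (m+1), ((∫ x in Icc (a ∘ i.succAbove) (b ∘ i.succAbove), F i (i.insertNth (b i) x)) -
        ∫ x in Icc (a ∘ i.succAbove) (b ∘ i.succAbove), F i (i.insertNth (a i) x))|
      ≤ ∑ _i : Fin (m+1), (L * (2*r)^m + L * (2*r)^m) := by
        refine (Finset.abs_sum_le_sum_abs _ _).trans (Finset.sum_le_sum fun i _ => ?_)
        refine (abs_sub _ _).trans (add_le_add ?_ ?_)
        · exact hface i (b i) (right_mem_Icc.2 (hab' i))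
        · exact hface i (a i) (left_mem_Icc.2 (hab' i))
    _ = 2 * (m+1) * L * (2*r)^m := by
        rw [Finset.sum_const, Finset.card_univ, Fintype.card_fin, nsmul_eq_mul]
        push_cast; ring

lemma div_bound {n : ℕ} {O : Set (Pt n)} {f : Pt n → ℝ} {L : ℝ}
    (hO : IsOpen O) (hL : 0 ≤ L)
    (hsm : ContDiffOn ℝ 2 f O)
    (hgrad : ∀ p ∈ O, ∀ v : EuclideanSpace ℝ (Fin n), |fderiv ℝ f p (v, (0:ℝ))| ≤ L * ‖v‖)
    {a b : Fin n → ℝ} {r : ℝ} (hr : 0 < r) (hab : ∀ i, b i - a i = 2 * r) {τ : ℝ}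
    (hmem : ∀ y ∈ Icc a b, ((EuclideanSpace.equiv (Fin n) ℝ).symm y, τ) ∈ O) :
    |∫ y in Icc a b, ∑ i, sdd f i ((EuclideanSpace.equiv (Fin n) ℝ).symm y, τ)| ≤
      2 * n * L * (2*r)^(n-1) := by
  cases n with
  | zero => simp
  | succ m =>
      have := div_bound_succ hO hL hsm hgrad hr hab hmem
      calc |∫ y in Icc a b, ∑ i, sdd f i ((EuclideanSpace.equiv (Fin (m+1)) ℝ).symm y, τ)|
          ≤ 2 * (m+1) * L * (2*r)^m := this
        _ = 2 * (m+1 : ℕ) * L * (2*r)^(m+1-1) := by push_cast; norm_num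

lemma cube_estimate {n : ℕ} {O : Set (Pt n)} {f : Pt n → ℝ} {L ε : ℝ}
    (hO : IsOpen O) (hc : Continuous f) (hL : 0 ≤ L)
    (hsm : ContDiffOn ℝ 2 f O)
    (hε : |ε| = 1)
    (heq : ∀ p ∈ O, td f p = ε * ∑ i, sdd f i p)
    (hgrad : ∀ p ∈ O, ∀ v : EuclideanSpace ℝ (Fin n), |fderiv ℝ f p (v, (0:ℝ))| ≤ L * ‖v‖)
    (hLip : ∀ (Y Z : EuclideanSpace ℝ (Fin n)) (τ : ℝ), |f (Z, τ) - f (Y, τ)| ≤ L * ‖Z - Y‖)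
    {X : EuclideanSpace ℝ (Fin n)} {r s' t' : ℝ} (hr : 0 < r) (hst : s' ≤ t')
    (hcyl : ∀ y ∈ Icc (fun i => X i - r) (fun i => X i + r), ∀ τ ∈ Icc s' t',
      ((EuclideanSpace.equiv (Fin n) ℝ).symm y, τ) ∈ O) :
    |f (X, t') - f (X, s')| ≤ 2 * L * Real.sqrt n * r + n * L * (t' - s') / r := by
  set ι := (EuclideanSpace.equiv (Fin n) ℝ).symm with hι
  set a : Fin n → ℝ := fun i => X i - r with ha
  set b : Fin n → ℝ := fun i => X i + r with hb
  set Q : Set (Fin n → ℝ) := Icc a b with hQ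
  have hab : ∀ i, b i - a i = 2 * r := fun i => by simp [ha, hb]; ring
  have hab' : a ≤ b := fun i => by have := hab i; dsimp at this ⊢; nlinarith
  have hQc : IsCompact Q := isCompact_Icc
  have hQm : MeasurableSet Q := measurableSet_Icc
  have hQvol : (volume Q).toReal = (2*r)^n := by
    rw [hQ, Real.volume_Icc_pi_toReal hab',
      Finset.prod_congr rfl (fun i _ => hab i), Finset.prod_const]
    simp
  have hQfin : volume Q < ∞ := hQc.measure_lt_top
  have hpow_pos : (0:ℝ) < (2*r)^n := by positivity
  have hdiff : ∀ p ∈ O, DifferentiableAt ℝ f p := fun p hp =>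
    ((hsm.differentiableOn (by norm_num)).differentiableAt (hO.mem_nhds hp))
  have hfC1 : ContDiffOn ℝ 1 (fderiv ℝ f) O :=
    hsm.fderiv_of_isOpen hO (by norm_num : (1:WithTop ℕ∞) + 1 ≤ 2)
  have htdc : ContinuousOn (td f) O := by
    exact hfC1.continuousOn.clm_apply continuousOn_const
  have hιcont : Continuous (ι : (Fin n → ℝ) → EuclideanSpace ℝ (Fin n)) := ι.continuous
  have hιc : Continuous (fun z : (Fin n → ℝ) × ℝ => ((ι z.1, z.2) : Pt n)) :=
    (hιcont.comp continuous_fst).prodMk continuous_snd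
  have hFTC : ∀ y ∈ Q, f (ι y, t') - f (ι y, s') = ∫ τ in Ioc s' t', td f (ι y, τ) := by
    intro y hy
    have hder : ∀ τ ∈ uIcc s' t', HasDerivAt (fun σ => f (ι y, σ)) (td f (ι y, τ)) τ := by
      intro τ hτ
      rw [uIcc_of_le hst] at hτ
      have hcurve : HasDerivAt (fun σ : ℝ => ((ι y, σ) : Pt n))
          ((0 : EuclideanSpace ℝ (Fin n)), (1:ℝ)) τ :=
        (hasDerivAt_const τ (ι y)).prodMk (hasDerivAt_id τ)
      exact ((hdiff _ (hcyl y hy τ hτ)).hasFDerivAt.comp_hasDerivAt τ hcurve)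
    have hint : IntervalIntegrable (fun τ => td f (ι y, τ)) volume s' t' := by
      apply ContinuousOn.intervalIntegrable
      rw [uIcc_of_le hst]
      exact htdc.comp ((continuous_const.prodMk continuous_id).continuousOn)
        (fun τ hτ => hcyl y hy τ hτ)
    have := intervalIntegral.integral_eq_sub_of_hasDerivAt hder hint
    rw [← this, intervalIntegral.integral_of_le hst]
  have hHcont : ContinuousOn (fun z : (Fin n → ℝ) × ℝ => td f (ι z.1, z.2)) (Q ×ˢ Icc s' t') := by
    exact htdc.comp hιc.continuousOn (fun z hz => hcyl z.1 hz.1 z.2 hz.2)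
  have hHint : IntegrableOn (fun z : (Fin n → ℝ) × ℝ => td f (ι z.1, z.2)) (Q ×ˢ Ioc s' t') := by
    apply (hHcont.integrableOn_compact (hQc.prod isCompact_Icc)).mono_set
    exact Set.prod_mono_right Ioc_subset_Icc_self
  have hprod : Integrable (fun z : (Fin n → ℝ) × ℝ => td f (ι z.1, z.2))
      ((volume.restrict Q).prod (volume.restrict (Ioc s' t'))) := by
    rwa [Measure.prod_restrict]
  have hswap : (∫ y in Q, ∫ τ in Ioc s' t', td f (ι y, τ)) =
      ∫ τ in Ioc s' t', ∫ y in Q, td f (ι y, τ) :=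
    MeasureTheory.integral_integral_swap hprod
  have hslice : ∀ τ ∈ Ioc s' t', |∫ y in Q, td f (ι y, τ)| ≤ 2*n*L*(2*r)^(n-1) := by
    intro τ hτ
    have hτ' : τ ∈ Icc s' t' := Ioc_subset_Icc_self hτ
    have hmemτ : ∀ y ∈ Q, ((ι y, τ) : Pt n) ∈ O := fun y hy => hcyl y hy τ hτ'
    have hcongr : ∫ y in Q, td f (ι y, τ) = ∫ y in Q, ε * ∑ i, sdd f i (ι y, τ) := by
      apply setIntegral_congr_fun hQm
      intro y hy
      exact heq _ (hmemτ y hy)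
    rw [hcongr, MeasureTheory.integral_const_mul, abs_mul, hε, one_mul]
    exact div_bound hO hL hsm hgrad hr hab hmemτ
  have hB : |∫ y in Q, (f (ι y, t') - f (ι y, s'))| ≤ (2*n*L*(2*r)^(n-1)) * (t' - s') := by
    have h1 : ∫ y in Q, (f (ι y, t') - f (ι y, s')) =
        ∫ τ in Ioc s' t', ∫ y in Q, td f (ι y, τ) := by
      rw [← hswap]
      exact setIntegral_congr_fun hQm hFTC
    rw [h1]
    have := norm_setIntegral_le_of_norm_le_const (μ := volume)
      (s := Ioc s' t') (f := fun τ => ∫ y in Q, td f (ι y, τ))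
      (C := 2*n*L*(2*r)^(n-1))
      (by rw [Real.volume_Ioc]; exact ENNReal.ofReal_lt_top)
      (fun τ hτ => hslice τ hτ)
    calc |∫ τ in Ioc s' t', ∫ y in Q, td f (ι y, τ)| ≤
        (2*n*L*(2*r)^(n-1)) * (volume (Ioc s' t')).toReal := this
      _ = (2*n*L*(2*r)^(n-1)) * (t' - s') := by
          rw [Real.volume_Ioc, ENNReal.toReal_ofReal (sub_nonneg.2 hst)]
  have hclose : ∀ τ : ℝ, |∫ y in Q, (f (ι y, τ) - f (X, τ))| ≤
      (L * (Real.sqrt n * r)) * (2*r)^n := by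
    intro τ
    have hbd : ∀ y ∈ Q, ‖f (ι y, τ) - f (X, τ)‖ ≤ L * (Real.sqrt n * r) := by
      intro y hy
      have hnorm : ‖ι y - X‖ ≤ Real.sqrt n * r := by
        apply euclidean_norm_le _ _ hr.le
        intro i
        have h1 : a i ≤ y i := hy.1 i
        have h2 : y i ≤ b i := hy.2 i
        have : (ι y - X) i = y i - X i := rfl
        rw [this, abs_le]
        constructor
        · simp only [ha] at h1; linarith
        · simp only [hb] at h2; linarith
      calc ‖f (ι y, τ) - f (X, τ)‖ = |f (ι y, τ) - f (X, τ)| := rfl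
        _ ≤ L * ‖ι y - X‖ := hLip X (ι y) τ
        _ ≤ L * (Real.sqrt n * r) := by
            exact mul_le_mul_of_nonneg_left hnorm hL
    calc |∫ y in Q, (f (ι y, τ) - f (X, τ))| ≤ (L * (Real.sqrt n * r)) * (volume Q).toReal :=
        norm_setIntegral_le_of_norm_le_const hQfin hbd
      _ = (L * (Real.sqrt n * r)) * (2*r)^n := by rw [hQvol]
  have hintA : IntegrableOn (fun y => f (ι y, t') - f (X, t')) Q :=
    (((hc.comp (hιcont.prodMk continuous_const :
        Continuous fun y : Fin n → ℝ => ((ι y, t') : Pt n))).sub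
      continuous_const).continuousOn).integrableOn_compact hQc
  have hintC : IntegrableOn (fun y => f (ι y, s') - f (X, s')) Q :=
    (((hc.comp (hιcont.prodMk continuous_const :
        Continuous fun y : Fin n → ℝ => ((ι y, s') : Pt n))).sub
      continuous_const).continuousOn).integrableOn_compact hQc
  have hintB : IntegrableOn (fun y => f (ι y, t') - f (ι y, s')) Q :=
    (((hc.comp (hιcont.prodMk continuous_const :
        Continuous fun y : Fin n → ℝ => ((ι y, t') : Pt n))).sub
      (hc.comp (hιcont.prodMk continuous_const :
        Continuous fun y : Fin n → ℝ => ((ι y, s') : Pt n)))).continuousOn).integrableOn_compact hQc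
  have hconst : ∫ _y in Q, (f (X, t') - f (X, s')) = (f (X, t') - f (X, s')) * (2*r)^n := by
    rw [setIntegral_const, smul_eq_mul, measureReal_def, hQvol, mul_comm]
  have hsplit : ∫ _y in Q, (f (X, t') - f (X, s')) =
      (∫ y in Q, (f (ι y, t') - f (ι y, s'))) - (∫ y in Q, (f (ι y, t') - f (X, t')))
        + (∫ y in Q, (f (ι y, s') - f (X, s'))) := by
    have h0 : ∫ _y in Q, (f (X, t') - f (X, s')) =
        ∫ y in Q, ((f (ι y, t') - f (ι y, s')) - (f (ι y, t') - f (X, t'))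
          + (f (ι y, s') - f (X, s'))) :=
      setIntegral_congr_fun hQm (fun y _ => by ring)
    have h1 := integral_add (hintB.sub hintA) hintC
    simp only [Pi.sub_apply] at h1
    rw [h0, h1, integral_sub hintB hintA]
  have hpow2 : (2*(n:ℝ)*L*(2*r)^(n-1)) * (t'-s') ≤ (n*L*(t'-s')/r) * (2*r)^n := by
    cases n with
    | zero => simp
    | succ m =>
        apply le_of_eq
        rw [pow_succ, Nat.succ_sub_one]
        push_cast
        field_simp
  have hkey : |f (X, t') - f (X, s')| * (2*r)^n ≤
      (2*L*Real.sqrt n*r + (n:ℝ)*L*(t'-s')/r) * (2*r)^n := by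
    have e1 : |f (X, t') - f (X, s')| * (2*r)^n = |(f (X, t') - f (X, s')) * (2*r)^n| := by
      rw [abs_mul, abs_of_pos hpow_pos]
    rw [e1, ← hconst, hsplit]
    have h3 := hclose t'
    have h4 := hclose s'
    calc |(∫ y in Q, (f (ι y, t') - f (ι y, s'))) - (∫ y in Q, (f (ι y, t') - f (X, t')))
          + (∫ y in Q, (f (ι y, s') - f (X, s')))|
        ≤ |(∫ y in Q, (f (ι y, t') - f (ι y, s'))) - (∫ y in Q, (f (ι y, t') - f (X, t')))|
            + |∫ y in Q, (f (ι y, s') - f (X, s'))| := abs_add_le _ _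
      _ ≤ (|∫ y in Q, (f (ι y, t') - f (ι y, s'))| + |∫ y in Q, (f (ι y, t') - f (X, t'))|)
            + |∫ y in Q, (f (ι y, s') - f (X, s'))| := by
          exact add_le_add_left (abs_sub _ _) _
      _ ≤ ((2*n*L*(2*r)^(n-1)) * (t' - s') + (L * (Real.sqrt n * r)) * (2*r)^n)
            + (L * (Real.sqrt n * r)) * (2*r)^n := add_le_add (add_le_add hB h3) h4
      _ ≤ ((n:ℝ)*L*(t'-s')/r * (2*r)^n + (L * (Real.sqrt n * r)) * (2*r)^n)
            + (L * (Real.sqrt n * r)) * (2*r)^n := by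
          exact add_le_add_left (add_le_add_left hpow2 _) _
      _ = (2*L*Real.sqrt n*r + (n:ℝ)*L*(t'-s')/r) * (2*r)^n := by ring
  exact le_of_mul_le_mul_right (by linarith [hkey]) hpow_pos

end Aux

theorem statement0 (n : ℕ) :
    ∃ c : ℝ, 0 < c ∧
      ∀ (O : Set (Pt n)) (f : Pt n → ℝ) (L : ℝ),
        IsOpen O → Continuous f → 0 ≤ L →
        (IsCaloricOn f O ∨ IsAdjCaloricOn f O) →
        (∀ p, p ∉ O → f p = 0) →
        (∀ p ∈ O, ∀ v : EuclideanSpace ℝ (Fin n), |fderiv ℝ f p (v, (0 : ℝ))| ≤ L * ‖v‖) →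
        ∀ (X : EuclideanSpace ℝ (Fin n)) (t s : ℝ),
          |f (X, t) - f (X, s)| ≤ c * L * Real.sqrt |t - s| := by
  refine ⟨2*n + 6*Real.sqrt n + 1, by positivity, ?_⟩
  intro O f L hO hc hL hcal h0 hgrad X t s
  -- extract smoothness and the equation
  obtain ⟨hsm, ε, hε, heq⟩ : ContDiffOn ℝ 2 f O ∧
      ∃ ε : ℝ, |ε| = 1 ∧ ∀ p ∈ O, td f p = ε * ∑ i, sdd f i p := by
    rcases hcal with h | h
    · exact ⟨h.1, 1, by norm_num, fun p hp => by have := h.2 p hp; linarith⟩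
    · exact ⟨h.1, -1, by norm_num, fun p hp => by have := h.2 p hp; linarith⟩
  have hdiff : ∀ p ∈ O, DifferentiableAt ℝ f p := fun p hp =>
    ((hsm.differentiableOn (by norm_num)).differentiableAt (hO.mem_nhds hp))
  have hLip := spatial_lipschitz hO hc hL hdiff h0 hgrad
  set c : ℝ := 2*n + 6*Real.sqrt n + 1 with hcdef
  have key : ∀ t s : ℝ, s ≤ t → |f (X, t) - f (X, s)| ≤ c * L * Real.sqrt (t - s) := by
    clear t s
    intro t s hst
    rcases eq_or_lt_of_le hst with rfl | hlt
    · simp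
    set ι := (EuclideanSpace.equiv (Fin n) ℝ).symm with hι
    set r := Real.sqrt (t - s) with hrdef
    have hr : 0 < r := Real.sqrt_pos.2 (sub_pos.2 hlt)
    have hr2 : r^2 = t - s := Real.sq_sqrt (sub_pos.2 hlt).le
    set Q : Set (Fin n → ℝ) := Icc (fun i => X i - r) (fun i => X i + r) with hQ
    have hLr : 0 ≤ L * r := mul_nonneg hL hr.le
    have hsn : 0 ≤ Real.sqrt n := Real.sqrt_nonneg _
    set B : ℝ := 2*L*Real.sqrt n*r + n*L*r with hBdef
    have hBnn : 0 ≤ B := by positivity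
    -- bound from `cube_estimate` applied on `[σ₁, σ₂] ⊆ [s, t]`
    have hCE : ∀ σ₁ σ₂ : ℝ, σ₁ ≤ σ₂ → s ≤ σ₁ → σ₂ ≤ t →
        (∀ y ∈ Q, ∀ τ ∈ Icc σ₁ σ₂, ((ι y, τ) : Pt n) ∈ O) →
        |f (X, σ₂) - f (X, σ₁)| ≤ B := by
      intro σ₁ σ₂ h12 hs1 h2t hcyl
      have := cube_estimate hO hc hL hsm hε heq hgrad hLip hr h12 hcyl
      have hle : (n:ℝ) * L * (σ₂ - σ₁) / r ≤ n * L * r := by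
        have h1 : σ₂ - σ₁ ≤ r^2 := by rw [hr2]; linarith
        have h2 : (n:ℝ) * L * (σ₂ - σ₁) ≤ n * L * r^2 := by
          apply mul_le_mul_of_nonneg_left h1 (by positivity)
        calc (n:ℝ) * L * (σ₂ - σ₁) / r ≤ n * L * r^2 / r := by gcongr
          _ = n * L * r := by field_simp
      calc |f (X, σ₂) - f (X, σ₁)| ≤ 2*L*Real.sqrt n*r + n*L*(σ₂-σ₁)/r := this
        _ ≤ B := by rw [hBdef]; linarith
    have hfinal : |f (X, t) - f (X, s)| ≤ c * L * r := by
      by_cases hin : ∀ y ∈ Q, ∀ τ ∈ Icc s t, ((ι y, τ) : Pt n) ∈ O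
      · have := hCE s t hst le_rfl le_rfl hin
        calc |f (X, t) - f (X, s)| ≤ B := this
          _ ≤ c * L * r := by
              rw [hBdef, hcdef]
              nlinarith [mul_nonneg (mul_nonneg hL hr.le) hsn]
      · push_neg at hin
        obtain ⟨y₀, hy₀, τ₀, hτ₀, hout⟩ := hin
        set K : Set ℝ := {τ | τ ∈ Icc s t ∧ ∃ y ∈ Q, ((ι y, τ) : Pt n) ∉ O} with hK
        have hKne : K.Nonempty := ⟨τ₀, hτ₀, y₀, hy₀, hout⟩
        have hKsub : K ⊆ Icc s t := fun τ hτ => hτ.1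
        have hKbb : BddBelow K := BddBelow.mono hKsub bddBelow_Icc
        have hKba : BddAbove K := BddAbove.mono hKsub bddAbove_Icc
        set a := sInf K with hadef
        set b := sSup K with hbdef
        have hacl : a ∈ closure K := csInf_mem_closure hKne hKbb
        have hbcl : b ∈ closure K := csSup_mem_closure hKne hKba
        have hclIcc : closure K ⊆ Icc s t := closure_minimal hKsub isClosed_Icc
        have haIcc : a ∈ Icc s t := hclIcc hacl
        have hbIcc : b ∈ Icc s t := hclIcc hbcl
        have hab : a ≤ b := csInf_le_csSup hKne hKbb hKba
        -- smallness of f(X, ·) on K and its closure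
        have hsmall : ∀ τ ∈ K, |f (X, τ)| ≤ L * (Real.sqrt n * r) := by
          rintro τ ⟨-, y, hy, hyout⟩
          have h00 : f (ι y, τ) = 0 := h0 _ hyout
          have hnorm : ‖X - ι y‖ ≤ Real.sqrt n * r := by
            apply euclidean_norm_le _ _ hr.le
            intro i
            have h1 : X i - r ≤ y i := hy.1 i
            have h2 : y i ≤ X i + r := hy.2 i
            have : (X - ι y) i = X i - y i := rfl
            rw [this, abs_le]
            constructor <;> linarith
          calc |f (X, τ)| = |f (X, τ) - f (ι y, τ)| := by rw [h00, sub_zero]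
            _ ≤ L * ‖X - ι y‖ := hLip (ι y) X τ
            _ ≤ L * (Real.sqrt n * r) := mul_le_mul_of_nonneg_left hnorm hL
        have hsmall_cl : ∀ τ ∈ closure K, |f (X, τ)| ≤ L * (Real.sqrt n * r) := by
          have hcl : IsClosed {τ : ℝ | |f (X, τ)| ≤ L * (Real.sqrt n * r)} := by
            apply isClosed_le ?_ continuous_const
            exact continuous_abs.comp (hc.comp (continuous_const.prodMk continuous_id))
          exact fun τ hτ => closure_minimal hsmall hcl hτ
        have hfa : |f (X, a)| ≤ L * (Real.sqrt n * r) := hsmall_cl a hacl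
        have hfb : |f (X, b)| ≤ L * (Real.sqrt n * r) := hsmall_cl b hbcl
        -- left estimate: |f(X,a) - f(X,s)| ≤ B
        have hleft : |f (X, a) - f (X, s)| ≤ B := by
          rcases eq_or_lt_of_le haIcc.1 with heq' | hsa
          · rw [← heq', sub_self, abs_zero]; exact hBnn
          have hIco : ∀ τ ∈ Ico s a, |f (X, τ) - f (X, s)| ≤ B := by
            intro τ hτ
            apply hCE s τ hτ.1 le_rfl (le_trans hτ.2.le haIcc.2)
            intro y hy σ hσ
            by_contra hσout
            have hσK : σ ∈ K := ⟨⟨hσ.1, le_trans hσ.2 (le_trans hτ.2.le haIcc.2)⟩, y, hy, hσout⟩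
            exact absurd (csInf_le hKbb hσK) (not_le.2 (lt_of_le_of_lt hσ.2 hτ.2))
          have hcl : IsClosed {τ : ℝ | |f (X, τ) - f (X, s)| ≤ B} := by
            apply isClosed_le ?_ continuous_const
            exact continuous_abs.comp
              ((hc.comp (continuous_const.prodMk continuous_id)).sub continuous_const)
          have : a ∈ closure (Ico s a) := by
            rw [closure_Ico hsa.ne]; exact ⟨haIcc.1, le_rfl⟩
          exact closure_minimal hIco hcl (closure_mono (fun τ hτ => hτ) this)
        -- right estimate: |f(X,t) - f(X,b)| ≤ B
        have hright : |f (X, t) - f (X, b)| ≤ B := by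
          rcases eq_or_lt_of_le hbIcc.2 with heq' | hbt
          · rw [heq', sub_self, abs_zero]; exact hBnn
          have hIoc : ∀ τ ∈ Ioc b t, |f (X, t) - f (X, τ)| ≤ B := by
            intro τ hτ
            apply hCE τ t hτ.2 (le_trans hbIcc.1 hτ.1.le) le_rfl
            intro y hy σ hσ
            by_contra hσout
            have hσK : σ ∈ K := ⟨⟨le_trans (le_trans hbIcc.1 hτ.1.le) hσ.1, hσ.2⟩, y, hy, hσout⟩
            exact absurd (le_csSup hKba hσK) (not_le.2 (lt_of_lt_of_le hτ.1 hσ.1))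
          have hcl : IsClosed {τ : ℝ | |f (X, t) - f (X, τ)| ≤ B} := by
            apply isClosed_le ?_ continuous_const
            exact continuous_abs.comp
              (continuous_const.sub (hc.comp (continuous_const.prodMk continuous_id)))
          have : b ∈ closure (Ioc b t) := by
            rw [closure_Ioc hbt.ne]; exact ⟨le_rfl, hbIcc.2⟩
          exact closure_minimal hIoc hcl (closure_mono (fun τ hτ => hτ) this)
        calc |f (X, t) - f (X, s)|
            = |(f (X, t) - f (X, b)) + (f (X, b) - f (X, a)) + (f (X, a) - f (X, s))| := by
              ring_nf
          _ ≤ |f (X, t) - f (X, b)| + |f (X, b) - f (X, a)| + |f (X, a) - f (X, s)| :=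
              (abs_add_le _ _).trans (add_le_add_left (abs_add_le _ _) _)
          _ ≤ B + (|f (X, b)| + |f (X, a)|) + B := by
              refine add_le_add (add_le_add hright ((abs_sub _ _))) hleft
          _ ≤ B + (L * (Real.sqrt n * r) + L * (Real.sqrt n * r)) + B :=
              add_le_add_left (add_le_add_right (add_le_add hfb hfa) _) _
          _ ≤ c * L * r := by
              rw [hBdef, hcdef]
              nlinarith [mul_nonneg (mul_nonneg hL hr.le) hsn]
    exact hfinal
  rcases le_total s t with hst | hst
  · have := key t s hst
    rwa [abs_of_nonneg (sub_nonneg.2 hst)]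
  · have := key s t hst
    rw [abs_sub_comm] at this
    rwa [abs_sub_comm t s, abs_of_nonneg (sub_nonneg.2 hst)]
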